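/- Let M, N_BS, N_d, L be positive integers. Let A_G ∈ ℂ^{M×L} and B_G ∈ ℂ^{N_BS×L} be fixed matrices, D ∈ ℂ^{L×L} a fixed diagonal matrix whose diagonal entries all have unit modulus (the per-subcarrier delay phases), and, on a probability space, let α_0, …, α_{L−1} be complex random variables with E[α_i · conj(α_j)] = λ_i if i = j and 0 if i ≠ j, and set D_α = diagonal(α_0,…,α_{L−1}) and Λ = diagonal(λ_0,…,λ_{L−1}). Define the random channel G = √(N_BS M) · A_G D D_α B_G^H. Then for every a ∈ ℂ^M, every diagonal Θ ∈ ℂ^{M×M}, and every W ∈ ℂ^{N_BS×N_d}: M · E[ ‖ a^H Θ G W ‖₂² ] = M² N_BS · a^H Θ A_G ( I ∘ (Λ B_G^H W W^H B_G) ) A_G^H Θ^H a. In particular, the average reflected power pattern does not depend on the unit-modulus diagonal matrix D, i.e., it is the same at every subcarrier. -/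

import Mathlib

open MeasureTheory Matrix Finset

private lemma vecMul_smul' {n m : Type*} [Fintype n] (v : n → ℂ) (c : ℂ)
    (N : Matrix n m ℂ) : v ᵥ* (c • N) = c • (v ᵥ* N) := by
  ext j
  simp only [Matrix.vecMul, dotProduct, Matrix.smul_apply, smul_eq_mul, Pi.smul_apply,
    Finset.mul_sum]
  exact Finset.sum_congr rfl fun i _ => by ring

private lemma vecMul_diag_split {k m n : Type*} [Fintype k] [Fintype m] [DecidableEq m]
    (v : k → ℂ) (P : Matrix k m ℂ) (q : m → ℂ) (R : Matrix m n ℂ) :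
    v ᵥ* (P * Matrix.diagonal q * R) = (fun l => (v ᵥ* P) l * q l) ᵥ* R := by
  rw [← Matrix.vecMul_vecMul, ← Matrix.vecMul_vecMul]
  have h : v ᵥ* P ᵥ* Matrix.diagonal q = fun l => (v ᵥ* P) l * q l := by
    funext l
    rw [Matrix.vecMul_diagonal]
  rw [h]


/-- With the random mmWave BS–RIS channel
`G = √(N_BS M) · A_G D D_α B_Gᴴ`, where `D` is a unit-modulus diagonal (delay-phase)
matrix and `D_α` carries uncorrelated path gains with average powers `λ_l`, the average
reflected power satisfies, for every `a`, every diagonal `Θ`, and every `W`: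
`M E‖aᴴ Θ G W‖₂² = M² N_BS · aᴴ Θ A_G (I ∘ (Λ B_Gᴴ W Wᴴ B_G)) A_Gᴴ Θᴴ a`;
in particular it does not depend on `D`, i.e. it is the same at every subcarrier. -/
theorem stmt6
    {Ω : Type*} [MeasurableSpace Ω] (μ : Measure Ω) [IsProbabilityMeasure μ]
    (M NBS Nd L : ℕ) (hM : 0 < M) (hNBS : 0 < NBS) (hNd : 0 < Nd) (hL : 0 < L)
    (AG : Matrix (Fin M) (Fin L) ℂ) (BG : Matrix (Fin NBS) (Fin L) ℂ)
    (D : Fin L → ℂ) (hD : ∀ l, ‖D l‖ = 1)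
    (α : Fin L → Ω → ℂ) (lam : Fin L → ℝ)
    (hα : ∀ i j : Fin L,
      ∫ ω, α i ω * (starRingEnd ℂ) (α j ω) ∂μ = if i = j then (lam i : ℂ) else 0)
    (hαint : ∀ i j : Fin L,
      Integrable (fun ω => α i ω * (starRingEnd ℂ) (α j ω)) μ)
    (a : Fin M → ℂ) (Θ : Matrix (Fin M) (Fin M) ℂ) (hΘ : Θ.IsDiag)
    (W : Matrix (Fin NBS) (Fin Nd) ℂ) :
    (((M : ℝ) * ∫ ω, ∑ d : Fin Nd,
        Complex.normSq
          (Matrix.vecMul (star a)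
            (Θ *
              ((Real.sqrt (NBS * M) : ℂ) •
                (AG * Matrix.diagonal D * Matrix.diagonal (fun l => α l ω) * BGᴴ)) *
              W) d) ∂μ : ℝ) : ℂ) =
      (M : ℂ) ^ 2 * (NBS : ℂ) *
        (star a ⬝ᵥ
          (Θ * AG *
            Matrix.hadamard 1
              (Matrix.diagonal (fun l => (lam l : ℂ)) * BGᴴ * W * Wᴴ * BG) *
            AGᴴ * Θᴴ).mulVec a) := by
  classical
  set c : ℝ := Real.sqrt (NBS * M) with hc
  set u : Fin L → ℂ := Matrix.vecMul (star a) (Θ * AG) with hu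
  set B' : Matrix (Fin L) (Fin Nd) ℂ := BGᴴ * W with hB
  have hc2 : (c : ℂ) * (c : ℂ) = (NBS : ℂ) * (M : ℂ) := by
    have : c * c = ((NBS : ℝ) * (M : ℝ)) := Real.mul_self_sqrt (by positivity)
    calc (c : ℂ) * (c : ℂ) = ((c * c : ℝ) : ℂ) := by push_cast; ring
      _ = (NBS : ℂ) * (M : ℂ) := by rw [this]; push_cast; ring
  have hDl : ∀ l, D l * (starRingEnd ℂ) (D l) = 1 := by
    intro l
    rw [Complex.mul_conj, Complex.normSq_eq_norm_sq, hD l]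
    norm_num
  -- pointwise expansion of the vecMul entry
  have key : ∀ (ω : Ω) (d : Fin Nd),
      Matrix.vecMul (star a)
        (Θ * ((c : ℂ) • (AG * Matrix.diagonal D * Matrix.diagonal (fun l => α l ω) * BGᴴ)) * W) d
      = ∑ l, ((c : ℂ) * (u l * D l) * B' l d) * α l ω := by
    intro ω d
    have h1 : Θ * ((c : ℂ) • (AG * Matrix.diagonal D * Matrix.diagonal (fun l => α l ω) * BGᴴ)) * W
        = (c : ℂ) • ((Θ * AG) * Matrix.diagonal (fun l => D l * α l ω) * B') := by
      rw [← Matrix.diagonal_mul_diagonal, hB]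
      simp only [Matrix.mul_smul, Matrix.smul_mul, Matrix.mul_assoc]
    rw [h1, vecMul_smul', Pi.smul_apply, smul_eq_mul, vecMul_diag_split, ← hu]
    simp only [Matrix.vecMul, dotProduct, Finset.mul_sum]
    exact Finset.sum_congr rfl fun l _ => by ring
  -- the integrand in complex form
  have hptwise : ∀ ω : Ω,
      ((∑ d : Fin Nd, Complex.normSq
          (Matrix.vecMul (star a)
            (Θ * ((c : ℂ) • (AG * Matrix.diagonal D * Matrix.diagonal (fun l => α l ω) * BGᴴ)) * W) d) : ℝ) : ℂ)
      = ∑ d : Fin Nd, ∑ l : Fin L, ∑ l' : Fin L,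
          (((c : ℂ) * (u l * D l) * B' l d) * (starRingEnd ℂ) ((c : ℂ) * (u l' * D l') * B' l' d))
            * (α l ω * (starRingEnd ℂ) (α l' ω)) := by
    intro ω
    push_cast
    refine Finset.sum_congr rfl fun d _ => ?_
    rw [← Complex.mul_conj, key ω d, map_sum, Finset.sum_mul_sum]
    exact Finset.sum_congr rfl fun l _ => Finset.sum_congr rfl fun l' _ => by
      rw [_root_.map_mul]; ring
  have hint : (((∫ ω, ∑ d : Fin Nd, Complex.normSq
          (Matrix.vecMul (star a)
            (Θ * ((c : ℂ) • (AG * Matrix.diagonal D * Matrix.diagonal (fun l => α l ω) * BGᴴ)) * W) d) ∂μ : ℝ)) : ℂ)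
      = ∑ d : Fin Nd, ∑ l : Fin L,
          (((c : ℂ) * (u l * D l) * B' l d) * (starRingEnd ℂ) ((c : ℂ) * (u l * D l) * B' l d))
            * (lam l : ℂ) := by
    rw [show (((∫ ω, ∑ d : Fin Nd, Complex.normSq
          (Matrix.vecMul (star a)
            (Θ * ((c : ℂ) • (AG * Matrix.diagonal D * Matrix.diagonal (fun l => α l ω) * BGᴴ)) * W) d) ∂μ : ℝ)) : ℂ)
        = ∫ ω, (((∑ d : Fin Nd, Complex.normSq
          (Matrix.vecMul (star a)
            (Θ * ((c : ℂ) • (AG * Matrix.diagonal D * Matrix.diagonal (fun l => α l ω) * BGᴴ)) * W) d)) : ℝ) : ℂ) ∂μ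
        from (integral_ofReal (𝕜 := ℂ)).symm]
    rw [MeasureTheory.integral_congr_ae (Filter.Eventually.of_forall hptwise)]
    rw [MeasureTheory.integral_finset_sum _ (fun d _ => ?_)]
    · refine Finset.sum_congr rfl fun d _ => ?_
      rw [MeasureTheory.integral_finset_sum _ (fun l _ => ?_)]
      · refine Finset.sum_congr rfl fun l _ => ?_
        rw [MeasureTheory.integral_finset_sum _ (fun l' _ => ((hαint l l').const_mul _))]
        have : ∀ l' : Fin L,
            ∫ ω, (((c : ℂ) * (u l * D l) * B' l d) * (starRingEnd ℂ) ((c : ℂ) * (u l' * D l') * B' l' d))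
              * (α l ω * (starRingEnd ℂ) (α l' ω)) ∂μ
            = (((c : ℂ) * (u l * D l) * B' l d) * (starRingEnd ℂ) ((c : ℂ) * (u l' * D l') * B' l' d))
              * (if l = l' then (lam l : ℂ) else 0) := by
          intro l'
          rw [MeasureTheory.integral_const_mul, hα l l']
        simp only [this, mul_ite, mul_zero]
        simp [Finset.sum_ite_eq, mem_univ]
      · exact MeasureTheory.integrable_finset_sum _ (fun l' _ => (hαint _ l').const_mul _)
    · exact MeasureTheory.integrable_finset_sum _ (fun l _ =>
        MeasureTheory.integrable_finset_sum _ (fun l' _ => (hαint l l').const_mul _))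
  -- RHS reduction
  have hhad : Matrix.hadamard (1 : Matrix (Fin L) (Fin L) ℂ)
      (Matrix.diagonal (fun l => (lam l : ℂ)) * BGᴴ * W * Wᴴ * BG)
      = Matrix.diagonal (fun l => (lam l : ℂ) * ∑ d : Fin Nd, B' l d * (starRingEnd ℂ) (B' l d)) := by
    ext i j
    by_cases h : i = j
    · subst h
      simp only [Matrix.hadamard_apply, Matrix.one_apply_eq, one_mul, Matrix.diagonal_apply_eq]
      have : Matrix.diagonal (fun l => (lam l : ℂ)) * BGᴴ * W * Wᴴ * BG
          = Matrix.diagonal (fun l => (lam l : ℂ)) * (B' * B'ᴴ) := by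
        rw [hB, Matrix.conjTranspose_mul]
        simp only [Matrix.conjTranspose_conjTranspose, Matrix.mul_assoc]
      rw [this]
      simp [Matrix.mul_apply, Matrix.diagonal_apply, Finset.mul_sum,
        Matrix.conjTranspose_apply]
    · simp [Matrix.hadamard_apply, Matrix.one_apply_ne h, Matrix.diagonal_apply_ne _ h]
  have hconj : ∀ l, (AGᴴ * Θᴴ).mulVec a l = (starRingEnd ℂ) (u l) := by
    intro l
    rw [← Matrix.conjTranspose_mul, hu]
    simp [Matrix.mulVec, Matrix.vecMul, dotProduct, Matrix.conjTranspose_apply, map_sum,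
      mul_comm]
  have hrhs : (star a ⬝ᵥ
        (Θ * AG *
          Matrix.hadamard 1
            (Matrix.diagonal (fun l => (lam l : ℂ)) * BGᴴ * W * Wᴴ * BG) *
          AGᴴ * Θᴴ).mulVec a)
      = ∑ l : Fin L, u l * ((lam l : ℂ) * ∑ d : Fin Nd, B' l d * (starRingEnd ℂ) (B' l d))
          * (starRingEnd ℂ) (u l) := by
    rw [hhad]
    have hassoc : Θ * AG * Matrix.diagonal (fun l => (lam l : ℂ) * ∑ d : Fin Nd, B' l d * (starRingEnd ℂ) (B' l d)) * AGᴴ * Θᴴ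
        = (Θ * AG) * Matrix.diagonal (fun l => (lam l : ℂ) * ∑ d : Fin Nd, B' l d * (starRingEnd ℂ) (B' l d)) * (AGᴴ * Θᴴ) := by
      simp only [Matrix.mul_assoc]
    rw [hassoc, Matrix.dotProduct_mulVec, vecMul_diag_split, ← hu]
    rw [show ((fun l => u l * ((lam l : ℂ) * ∑ d : Fin Nd, B' l d * (starRingEnd ℂ) (B' l d))) ᵥ* (AGᴴ * Θᴴ)) ⬝ᵥ a
        = (fun l => u l * ((lam l : ℂ) * ∑ d : Fin Nd, B' l d * (starRingEnd ℂ) (B' l d))) ⬝ᵥ ((AGᴴ * Θᴴ).mulVec a) from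
      (Matrix.dotProduct_mulVec _ _ _).symm]
    simp only [dotProduct, hconj]
  -- put it together
  rw [hrhs, Complex.ofReal_mul, hint, Finset.sum_comm]
  simp only [Complex.ofReal_natCast, Finset.mul_sum, Finset.sum_mul]
  refine Finset.sum_congr rfl fun l _ => Finset.sum_congr rfl fun d _ => ?_
  simp only [_root_.map_mul, Complex.conj_ofReal]
  linear_combination
    ((M : ℂ) * (u l * (starRingEnd ℂ) (u l)) * (B' l d * (starRingEnd ℂ) (B' l d)) *
        (lam l : ℂ) * ((c : ℂ) * (c : ℂ))) * (hDl l) +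
      ((M : ℂ) * (u l * (starRingEnd ℂ) (u l)) * (B' l d * (starRingEnd ℂ) (B' l d)) *
        (lam l : ℂ)) * hc2
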